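/- Let V = (v_i) be a normalized, 1-unconditional, right dominant basic sequence. If X is a quotient of a Banach space Z with a shrinking bimonotone FDD (F_i) satisfying subsequential V upper block estimates (i.e., there is a bounded linear surjection Q : Z -> X), then X satisfies subsequential V upper tree estimates. -/

import Mathlib

open Filter Topology Set

noncomputable section

/-- A bundled (real) Banach space. -/
structure BanachSp : Type 1 where
  carrier : Type
  [nacg : NormedAddCommGroup carrier]
  [nsp : NormedSpace ℝ carrier]
  [complete : CompleteSpace carrier]

attribute [instance] BanachSp.nacg BanachSp.nsp BanachSp.complete

instance : CoeSort BanachSp Type := ⟨BanachSp.carrier⟩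

section Seqs

variable {V : Type*} [NormedAddCommGroup V] [NormedSpace ℝ V]
variable {W : Type*} [NormedAddCommGroup W] [NormedSpace ℝ W]
variable {X : Type*} [NormedAddCommGroup X] [NormedSpace ℝ X]

/-- `DomBy u x C` : the sequence `(u i)` `C`-dominates the sequence `(x i)`, i.e.
`‖∑ a i • x i‖ ≤ C * ‖∑ a i • u i‖` for all finitely supported scalars. -/
def DomBy (u : ℕ → V) (x : ℕ → X) (C : ℝ) : Prop :=
  ∀ (a : ℕ → ℝ) (n : ℕ),
    ‖∑ i ∈ Finset.range n, a i • x i‖ ≤ C * ‖∑ i ∈ Finset.range n, a i • u i‖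

def IsNormalized (v : ℕ → V) : Prop := ∀ i, ‖v i‖ = 1

/-- A basic sequence: nonzero vectors with uniformly bounded partial sum projections. -/
def IsBasicSeq (v : ℕ → V) : Prop :=
  (∀ i, v i ≠ 0) ∧ ∃ K : ℝ, 1 ≤ K ∧ ∀ (a : ℕ → ℝ) (m n : ℕ), m ≤ n →
    ‖∑ i ∈ Finset.range m, a i • v i‖ ≤ K * ‖∑ i ∈ Finset.range n, a i • v i‖

/-- `1`-unconditionality : changing signs of coefficients does not change the norm. -/
def IsOneUnconditional (v : ℕ → V) : Prop :=
  ∀ (a ε : ℕ → ℝ), (∀ i, ε i = 1 ∨ ε i = -1) → ∀ n : ℕ,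
    ‖∑ i ∈ Finset.range n, (ε i * a i) • v i‖ = ‖∑ i ∈ Finset.range n, a i • v i‖

/-- Bimonotonicity of a basic sequence: interval projections have norm at most one. -/
def IsBimonotoneSeq (v : ℕ → V) : Prop :=
  ∀ (a : ℕ → ℝ) (p q n : ℕ), q ≤ n →
    ‖∑ i ∈ Finset.Ico p q, a i • v i‖ ≤ ‖∑ i ∈ Finset.range n, a i • v i‖

/-- `(v i)` is `D`-right-dominant : if `m i ≤ n i` for all `i` then `(v (m i))` is
`D`-dominated by `(v (n i))`. -/
def RightDominantC (v : ℕ → V) (D : ℝ) : Prop :=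
  ∀ m n : ℕ → ℕ, StrictMono m → StrictMono n → (∀ i, m i ≤ n i) →
    DomBy (fun i => v (n i)) (fun i => v (m i)) D

def RightDominant (v : ℕ → V) : Prop := ∃ D : ℝ, 1 ≤ D ∧ RightDominantC v D

/-- `(v i)` is `D`-left-dominant : if `m i ≤ n i` for all `i` then `(v (m i))`
`D`-dominates `(v (n i))`. -/
def LeftDominantC (v : ℕ → V) (D : ℝ) : Prop :=
  ∀ m n : ℕ → ℕ, StrictMono m → StrictMono n → (∀ i, m i ≤ n i) →
    DomBy (fun i => v (m i)) (fun i => v (n i)) D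

/-- `C`-block-stability: any two normalized block bases whose blocks run along the same
successive intervals are `C`-equivalent. -/
def BlockStableC (v : ℕ → V) (C : ℝ) : Prop :=
  ∀ (x y : ℕ → V) (k : ℕ → ℕ), StrictMono k →
    (∀ i, x i ∈ Submodule.span ℝ (v '' Set.Ico (k i) (k (i+1)))) →
    (∀ i, y i ∈ Submodule.span ℝ (v '' Set.Ico (k i) (k (i+1)))) →
    (∀ i, ‖x i‖ = 1) → (∀ i, ‖y i‖ = 1) → DomBy x y C

def BlockStable (v : ℕ → V) : Prop := ∃ C : ℝ, 1 ≤ C ∧ BlockStableC v C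

/-- A basic sequence is shrinking if every functional is small on far tails of its span. -/
def ShrinkingSeq (v : ℕ → V) : Prop :=
  ∀ φ : V →L[ℝ] ℝ, ∀ δ : ℝ, 0 < δ → ∃ m : ℕ, ∀ (a : ℕ → ℝ) (n : ℕ),
    ‖∑ i ∈ Finset.Ico m n, a i • v i‖ ≤ 1 →
    |φ (∑ i ∈ Finset.Ico m n, a i • v i)| ≤ δ

/-- A basic sequence is boundedly complete if series with bounded partial sums converge. -/
def BoundedlyCompleteSeq (v : ℕ → V) : Prop :=
  ∀ a : ℕ → ℝ, (∃ M : ℝ, ∀ n, ‖∑ i ∈ Finset.range n, a i • v i‖ ≤ M) →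
    ∃ s : V, Tendsto (fun n => ∑ i ∈ Finset.range n, a i • v i) atTop (𝓝 s)

/-- `(w i)` represents (isometrically) the sequence of biorthogonal functionals of the
`1`-unconditional basic sequence `(v i)`: the norm of `∑ a i • w i` is the supremum of the
pairings `∑ a i * b i` over `b` with `‖∑ b i • v i‖ ≤ 1`. -/
def IsBiorthDual (v : ℕ → V) (w : ℕ → W) : Prop :=
  ∀ (a : ℕ → ℝ) (n : ℕ),
    IsLUB {r : ℝ | ∃ b : ℕ → ℝ, ‖∑ i ∈ Finset.range n, b i • v i‖ ≤ 1 ∧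
      r = ∑ i ∈ Finset.range n, a i * b i} ‖∑ i ∈ Finset.range n, a i • w i‖

def WeaklyNullSeq (x : ℕ → X) : Prop :=
  ∀ φ : X →L[ℝ] ℝ, Tendsto (fun i => φ (x i)) atTop (𝓝 0)

end Seqs

/-- A finite-dimensional decomposition (FDD) of `Z` : finite-dimensional subspaces `E i`
together with the coordinate projections `P i`, such that every `z` is the sum of its
coordinates, uniquely. -/
structure FDD (Z : Type*) [NormedAddCommGroup Z] [NormedSpace ℝ Z] where
  E : ℕ → Submodule ℝ Z
  finDim : ∀ n, FiniteDimensional ℝ (E n)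
  P : ℕ → Z →L[ℝ] Z
  mem_E : ∀ i z, P i z ∈ E i
  sum_eq : ∀ z : Z, Tendsto (fun n => ∑ i ∈ Finset.range n, P i z) atTop (𝓝 z)
  unique : ∀ (z : Z) (f : ℕ → Z), (∀ i, f i ∈ E i) →
    Tendsto (fun n => ∑ i ∈ Finset.range n, f i) atTop (𝓝 z) → ∀ i, f i = P i z

namespace FDD

variable {Z : Type*} [NormedAddCommGroup Z] [NormedSpace ℝ Z]
variable {V : Type*} [NormedAddCommGroup V] [NormedSpace ℝ V]
variable {W : Type*} [NormedAddCommGroup W] [NormedSpace ℝ W]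

/-- The canonical projection `P^E_s` onto the span of `(E i : i ∈ s)`. -/
def proj (F : FDD Z) (s : Finset ℕ) : Z →L[ℝ] Z := ∑ i ∈ s, F.P i

/-- The support of a vector with respect to the FDD. -/
def supp (F : FDD Z) (z : Z) : Set ℕ := {i | F.P i z ≠ 0}

/-- `min supp_E z`. -/
def minSupp (F : FDD Z) (z : Z) : ℕ := sInf (F.supp z)

/-- A block sequence with respect to an FDD: supports lie in successive intervals. -/
def IsBlockSeq (F : FDD Z) (z : ℕ → Z) : Prop :=
  ∃ k : ℕ → ℕ, StrictMono k ∧ ∀ i, F.supp (z i) ⊆ Set.Ico (k i) (k (i+1))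

/-- Bimonotonicity: all interval projections have norm at most `1`. -/
def Bimonotone (F : FDD Z) : Prop :=
  ∀ (m n : ℕ) (z : Z), ‖F.proj (Finset.Icc m n) z‖ ≤ ‖z‖

/-- `C` is the projection constant: the supremum of norms of interval projections. -/
def IsProjConst (F : FDD Z) (C : ℝ) : Prop :=
  IsLUB {r : ℝ | ∃ (m n : ℕ) (z : Z), ‖z‖ ≤ 1 ∧ r = ‖F.proj (Finset.Icc m n) z‖} C

/-- The FDD is shrinking: every functional is the norm limit of its finite-dimensional
restrictions, i.e. the biorthogonal functionals form an FDD of the dual. -/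
def Shrinking (F : FDD Z) : Prop :=
  ∀ φ : Z →L[ℝ] ℝ,
    Tendsto (fun n => ‖φ - φ.comp (F.proj (Finset.range n))‖) atTop (𝓝 0)

/-- The FDD is boundedly complete. -/
def BoundedlyComplete (F : FDD Z) : Prop :=
  ∀ f : ℕ → Z, (∀ i, f i ∈ F.E i) →
    (∃ M : ℝ, ∀ n, ‖∑ i ∈ Finset.range n, f i‖ ≤ M) →
    ∃ z : Z, Tendsto (fun n => ∑ i ∈ Finset.range n, f i) atTop (𝓝 z)

/-- `H` is a blocking of `F`. -/
def IsBlockingOf (H F : FDD Z) : Prop :=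
  ∃ m : ℕ → ℕ, m 0 = 0 ∧ StrictMono m ∧
    ∀ j, H.E j = ⨆ i ∈ Finset.Ico (m j) (m (j+1)), F.E i

/-- The closed span `Z_m` of the subspaces `E i`, `i ≥ m` (the first `m` coordinates
removed). -/
def tail (F : FDD Z) (m : ℕ) : Set Z :=
  closure (↑(⨆ i ∈ Set.Ici m, F.E i) : Set Z)

/-- Subsequential `C`-`V`-upper block estimates. -/
def UpperBlockC (F : FDD Z) (v : ℕ → V) (C : ℝ) : Prop :=
  ∀ z : ℕ → Z, F.IsBlockSeq z → (∀ i, ‖z i‖ = 1) →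
    DomBy (fun i => v (F.minSupp (z i))) z C

def UpperBlock (F : FDD Z) (v : ℕ → V) : Prop := ∃ C : ℝ, 1 ≤ C ∧ F.UpperBlockC v C

/-- Subsequential `C`-`V`-lower block estimates. -/
def LowerBlockC (F : FDD Z) (v : ℕ → V) (C : ℝ) : Prop :=
  ∀ z : ℕ → Z, F.IsBlockSeq z → (∀ i, ‖z i‖ = 1) →
    DomBy z (fun i => v (F.minSupp (z i))) C

def LowerBlock (F : FDD Z) (v : ℕ → V) : Prop := ∃ C : ℝ, 1 ≤ C ∧ F.LowerBlockC v C

/-- A functional supported (w.r.t. the biorthogonal FDD `(E i ^*)`) on the finite set `s`. -/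
def dualSupported (F : FDD Z) (s : Finset ℕ) (φ : Z →L[ℝ] ℝ) : Prop :=
  ∀ z : Z, φ z = φ (F.proj s z)

/-- A block sequence of the biorthogonal functionals `(E i ^*)`. -/
def IsDualBlockSeq (F : FDD Z) (φ : ℕ → Z →L[ℝ] ℝ) : Prop :=
  ∃ k : ℕ → ℕ, StrictMono k ∧
    ∀ i, F.dualSupported (Finset.Ico (k i) (k (i+1))) (φ i)

/-- `min supp` of a functional w.r.t. `(E i ^*)`. -/
def dualMinSupp (F : FDD Z) (φ : Z →L[ℝ] ℝ) : ℕ :=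
  sInf {j | ∃ z, φ (F.P j z) ≠ 0}

/-- The biorthogonal FDD `(E i ^*)` satisfies subsequential `C`-`V^*`-lower block
estimates in `Z^(*)`. -/
def DualLowerBlockC (F : FDD Z) (w : ℕ → W) (C : ℝ) : Prop :=
  ∀ φ : ℕ → Z →L[ℝ] ℝ, F.IsDualBlockSeq φ → (∀ i, ‖φ i‖ = 1) →
    DomBy φ (fun i => w (F.dualMinSupp (φ i))) C

def DualLowerBlock (F : FDD Z) (w : ℕ → W) : Prop := ∃ C : ℝ, 1 ≤ C ∧ F.DualLowerBlockC w C

/-- The biorthogonal FDD `(E i ^*)` satisfies subsequential `C`-`V`-upper block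
estimates. -/
def DualUpperBlockC (F : FDD Z) (w : ℕ → W) (C : ℝ) : Prop :=
  ∀ φ : ℕ → Z →L[ℝ] ℝ, F.IsDualBlockSeq φ → (∀ i, ‖φ i‖ = 1) →
    DomBy (fun i => w (F.dualMinSupp (φ i))) φ C

/-- A `δ̄`-skipped block sequence w.r.t. the FDD. -/
def IsSkippedBlock (F : FDD Z) (δ : ℕ → ℝ) (y : ℕ → Z) : Prop :=
  (∀ i, ‖y i‖ = 1) ∧ ∃ k : ℕ → ℕ, k 0 = 0 ∧ StrictMono k ∧
    ∀ i, ‖F.proj (Finset.Ioo (k i) (k (i+1))) (y i) - y i‖ < δ i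

end FDD

section Trees

variable {V : Type*} [NormedAddCommGroup V] [NormedSpace ℝ V]
variable {W : Type*} [NormedAddCommGroup W] [NormedSpace ℝ W]

/-- The finite set `{n 0, …, n (2l+1)}`, i.e. the branch node of level `l+1` along the
strictly increasing sequence `n`. -/
def branchSet (n : ℕ → ℕ) (l : ℕ) : Finset ℕ := Finset.image n (Finset.range (2*l+2))

/-- A normalized weakly null even tree in `X` (indexed by finite sets of naturals, which
correspond to finite strictly increasing sequences). -/
def WNEvenTree {X : Type*} [NormedAddCommGroup X] [NormedSpace ℝ X]
    (x : Finset ℕ → X) : Prop :=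
  (∀ s : Finset ℕ, Even s.card → ‖x s‖ = 1) ∧
  ∀ s : Finset ℕ, Odd s.card →
    ∀ φ : X →L[ℝ] ℝ, Tendsto (fun k => φ (x (insert k s))) atTop (𝓝 0)

/-- Subsequential `C`-`V`-upper tree estimates. -/
def UpperTreeC (v : ℕ → V) (X : Type*) [NormedAddCommGroup X] [NormedSpace ℝ X]
    (C : ℝ) : Prop :=
  ∀ x : Finset ℕ → X, WNEvenTree x →
    ∃ n : ℕ → ℕ, StrictMono n ∧
      DomBy (fun l => v (n (2*l))) (fun l => x (branchSet n l)) C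

/-- Subsequential `V`-upper tree estimates. -/
def UpperTree (v : ℕ → V) (X : Type*) [NormedAddCommGroup X] [NormedSpace ℝ X] : Prop :=
  ∃ C : ℝ, 1 ≤ C ∧ UpperTreeC v X C

/-- A normalized `w^*`-null even tree in the dual of `X`. -/
def WStarNullEvenTree {X : Type*} [NormedAddCommGroup X] [NormedSpace ℝ X]
    (f : Finset ℕ → (X →L[ℝ] ℝ)) : Prop :=
  (∀ s : Finset ℕ, Even s.card → ‖f s‖ = 1) ∧
  ∀ s : Finset ℕ, Odd s.card →
    ∀ u : X, Tendsto (fun k => f (insert k s) u) atTop (𝓝 0)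

/-- Subsequential `C`-`V^*`-lower `w^*` tree estimates for the dual of `X`. -/
def LowerWStarTreeC (w : ℕ → W) (X : Type*) [NormedAddCommGroup X] [NormedSpace ℝ X]
    (C : ℝ) : Prop :=
  ∀ f : Finset ℕ → (X →L[ℝ] ℝ), WStarNullEvenTree f →
    ∃ n : ℕ → ℕ, StrictMono n ∧
      DomBy (fun l => f (branchSet n l)) (fun l => w (n (2*l))) C

end Trees

section Maps

variable {X : Type*} [NormedAddCommGroup X] [NormedSpace ℝ X]
variable {Y : Type*} [NormedAddCommGroup Y] [NormedSpace ℝ Y]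

/-- `X` embeds isomorphically into `Y`. -/
def Embeds (X Y : Type*) [NormedAddCommGroup X] [NormedSpace ℝ X]
    [NormedAddCommGroup Y] [NormedSpace ℝ Y] : Prop :=
  ∃ T : X →L[ℝ] Y, ∃ c : ℝ, 0 < c ∧ ∀ x : X, c * ‖x‖ ≤ ‖T x‖

/-- `X` is a quotient of `Z` (there is a bounded linear surjection `Z → X`). -/
def IsQuotientOf (X Z : Type*) [NormedAddCommGroup X] [NormedSpace ℝ X]
    [NormedAddCommGroup Z] [NormedSpace ℝ Z] : Prop :=
  ∃ Q : Z →L[ℝ] X, Function.Surjective Q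

/-- A map between dual spaces is `w^*`-`w^*` continuous. -/
def WStarWStarContinuous {X Z : Type*} [NormedAddCommGroup X] [NormedSpace ℝ X]
    [NormedAddCommGroup Z] [NormedSpace ℝ Z]
    (T : StrongDual ℝ X →L[ℝ] StrongDual ℝ Z) : Prop :=
  Continuous (fun φ : WeakDual ℝ X =>
    StrongDual.toWeakDual (T (WeakDual.toStrongDual φ)))

end Maps


section UncondTools

variable {V : Type*} [NormedAddCommGroup V] [NormedSpace ℝ V] {v : ℕ → V}

lemma uncond_mul (hvu : IsOneUnconditional v) (a lam : ℕ → ℝ)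
    (hlam : ∀ i, |lam i| ≤ 1) (n : ℕ) :
    ‖∑ i ∈ Finset.range n, (lam i * a i) • v i‖ ≤ ‖∑ i ∈ Finset.range n, a i • v i‖ := by
  have key : ∀ j, ‖∑ i ∈ Finset.range n, ((if i < j then lam i else 1) * a i) • v i‖ ≤
      ‖∑ i ∈ Finset.range n, a i • v i‖ := by
    intro j
    induction j with
    | zero => simp
    | succ j ih =>
      have hsgn : ∀ i, (if i = j then (-1:ℝ) else 1) = 1 ∨ (if i = j then (-1:ℝ) else 1) = -1 := by
        intro i; by_cases h : i = j <;> simp [h]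
      have hflip := hvu (fun i => (if i < j then lam i else 1) * a i)
        (fun i => if i = j then (-1:ℝ) else 1) hsgn n
      have hlj := abs_le.1 (hlam j)
      have hdecomp : ∑ i ∈ Finset.range n, ((if i < j+1 then lam i else 1) * a i) • v i
          = ((1 + lam j)/2) • (∑ i ∈ Finset.range n, ((if i < j then lam i else 1) * a i) • v i)
            + ((1 - lam j)/2) • (∑ i ∈ Finset.range n,
                ((if i = j then (-1:ℝ) else 1) * ((if i < j then lam i else 1) * a i)) • v i) := by
        rw [Finset.smul_sum, Finset.smul_sum, ← Finset.sum_add_distrib]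
        refine Finset.sum_congr rfl (fun i _ => ?_)
        rw [smul_smul, smul_smul, ← add_smul]
        congr 1
        by_cases h : i = j
        · subst h
          rw [if_pos (Nat.lt_succ_self i), if_neg (Nat.lt_irrefl i), if_pos rfl]
          ring
        · rw [if_neg h]
          by_cases h2 : i < j
          · rw [if_pos h2, if_pos (by omega : i < j + 1)]
            ring
          · rw [if_neg h2, if_neg (by omega : ¬ (i < j + 1))]
            ring
      have h1 : (0:ℝ) ≤ (1 + lam j)/2 := by linarith [hlj.1]
      have h2 : (0:ℝ) ≤ (1 - lam j)/2 := by linarith [hlj.2]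
      calc ‖∑ i ∈ Finset.range n, ((if i < j+1 then lam i else 1) * a i) • v i‖
          ≤ ((1 + lam j)/2) * ‖∑ i ∈ Finset.range n, ((if i < j then lam i else 1) * a i) • v i‖
            + ((1 - lam j)/2) * ‖∑ i ∈ Finset.range n,
                ((if i = j then (-1:ℝ) else 1) * ((if i < j then lam i else 1) * a i)) • v i‖ := by
            rw [hdecomp]
            refine (norm_add_le _ _).trans ?_
            rw [norm_smul, norm_smul, Real.norm_eq_abs, Real.norm_eq_abs,
              abs_of_nonneg h1, abs_of_nonneg h2]
        _ = ‖∑ i ∈ Finset.range n, ((if i < j then lam i else 1) * a i) • v i‖ := by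
            rw [hflip]; ring
        _ ≤ ‖∑ i ∈ Finset.range n, a i • v i‖ := ih
  have hfin := key n
  have heq : ∑ i ∈ Finset.range n, ((if i < n then lam i else 1) * a i) • v i
      = ∑ i ∈ Finset.range n, (lam i * a i) • v i :=
    Finset.sum_congr rfl fun i hi => by rw [if_pos (Finset.mem_range.1 hi)]
  rwa [heq] at hfin

lemma uncond_coord (hvu : IsOneUnconditional v) (hvn : IsNormalized v)
    (a : ℕ → ℝ) {n j : ℕ} (hj : j < n) :
    |a j| ≤ ‖∑ i ∈ Finset.range n, a i • v i‖ := by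
  have h := uncond_mul hvu a (fun i => if i = j then 1 else 0)
    (fun i => by by_cases h : i = j <;> simp [h]) n
  have hs : ∑ i ∈ Finset.range n, ((if i = j then (1:ℝ) else 0) * a i) • v i = a j • v j := by
    rw [Finset.sum_eq_single j]
    · simp
    · intro i _ hne; simp [hne]
    · intro hn; exact absurd (Finset.mem_range.2 hj) hn
  rw [hs, norm_smul, Real.norm_eq_abs, hvn j, mul_one] at h
  exact h

open Classical in
noncomputable def pushCoef (m : ℕ → ℕ) (c : ℕ → ℝ) : ℕ → ℝ :=
  fun i => if h : ∃ l, m l = i then c h.choose else 0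

lemma pushCoef_apply {m : ℕ → ℕ} (hm : StrictMono m) (c : ℕ → ℝ) (l : ℕ) :
    pushCoef m c (m l) = c l := by
  have h : ∃ l', m l' = m l := ⟨l, rfl⟩
  rw [pushCoef, dif_pos h]
  congr 1
  exact hm.injective h.choose_spec

lemma pushCoef_of_not {m : ℕ → ℕ} (c : ℕ → ℝ) {i : ℕ} (h : ¬ ∃ l, m l = i) :
    pushCoef m c i = 0 := by
  rw [pushCoef, dif_neg h]

lemma sum_pushCoef {m : ℕ → ℕ} (hm : StrictMono m) (c : ℕ → ℝ) (N : ℕ) :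
    ∑ i ∈ Finset.range (m N), pushCoef m c i • v i
      = ∑ l ∈ Finset.range N, c l • v (m l) := by
  have himg : (Finset.range N).image m ⊆ Finset.range (m N) := by
    intro i hi
    obtain ⟨l, hl, rfl⟩ := Finset.mem_image.1 hi
    exact Finset.mem_range.2 (hm (Finset.mem_range.1 hl))
  rw [← Finset.sum_subset himg ?_]
  · rw [Finset.sum_image (fun a _ b _ hab => hm.injective hab)]
    exact Finset.sum_congr rfl fun l _ => by rw [pushCoef_apply hm]
  · intro i hi hni
    have hz : pushCoef m c i = 0 := by
      by_cases h : ∃ l, m l = i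
      · exfalso
        apply hni
        refine Finset.mem_image.2 ⟨h.choose, Finset.mem_range.2 ?_, h.choose_spec⟩
        have : m h.choose < m N := by rw [h.choose_spec]; exact Finset.mem_range.1 hi
        exact hm.lt_iff_lt.1 this
      · exact pushCoef_of_not c h
    rw [hz, zero_smul]

lemma uncond_mul_sub (hvu : IsOneUnconditional v) {m : ℕ → ℕ} (hm : StrictMono m)
    (c lam : ℕ → ℝ) (hlam : ∀ l, |lam l| ≤ 1) (N : ℕ) :
    ‖∑ l ∈ Finset.range N, (lam l * c l) • v (m l)‖
      ≤ ‖∑ l ∈ Finset.range N, c l • v (m l)‖ := by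
  rw [← sum_pushCoef hm (fun l => lam l * c l) N, ← sum_pushCoef hm c N]
  have hx : ∀ i, pushCoef m (fun l => lam l * c l) i = pushCoef m lam i * pushCoef m c i := by
    intro i
    by_cases h : ∃ l, m l = i
    · obtain ⟨l, rfl⟩ := h
      rw [pushCoef_apply hm, pushCoef_apply hm, pushCoef_apply hm]
    · rw [pushCoef_of_not _ h, pushCoef_of_not c h, mul_zero]
  rw [show (fun i => pushCoef m (fun l => lam l * c l) i • v i)
      = fun i => (pushCoef m lam i * pushCoef m c i) • v i from funext fun i => by rw [hx]]
  apply uncond_mul hvu (pushCoef m c) (pushCoef m lam)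
  intro i
  by_cases h : ∃ l, m l = i
  · obtain ⟨l, rfl⟩ := h
    rw [pushCoef_apply hm]
    exact hlam l
  · rw [pushCoef_of_not _ h]; simp

lemma uncond_coord_sub (hvu : IsOneUnconditional v) (hvn : IsNormalized v)
    {m : ℕ → ℕ} (hm : StrictMono m) (c : ℕ → ℝ) {N l : ℕ} (hl : l < N) :
    |c l| ≤ ‖∑ l' ∈ Finset.range N, c l' • v (m l')‖ := by
  rw [← sum_pushCoef hm c N]
  have h := uncond_coord hvu hvn (pushCoef m c) (hm hl)
  rwa [pushCoef_apply hm] at h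

end UncondTools

section FDDTools

variable {Z : Type*} [NormedAddCommGroup Z] [NormedSpace ℝ Z]

lemma FDD.proj_apply (F : FDD Z) (s : Finset ℕ) (z : Z) :
    F.proj s z = ∑ i ∈ s, F.P i z := by
  simp [FDD.proj, ContinuousLinearMap.sum_apply]

lemma FDD.P_of_mem (F : FDD Z) {i : ℕ} {e : Z} (he : e ∈ F.E i) (j : ℕ) :
    F.P j e = if j = i then e else 0 := by
  have hmem : ∀ j, (if j = i then e else 0) ∈ F.E j := by
    intro j
    by_cases h : j = i
    · subst h; rw [if_pos rfl]; exact he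
    · rw [if_neg h]; exact zero_mem _
  have hsum : Tendsto (fun n => ∑ j ∈ Finset.range n, (if j = i then e else 0)) atTop (𝓝 e) := by
    apply tendsto_atTop_of_eventually_const (i₀ := i + 1)
    intro n hn
    rw [Finset.sum_ite_eq' (Finset.range n) i (fun _ => e),
      if_pos (Finset.mem_range.2 (by omega))]
  exact (F.unique e _ hmem hsum j).symm

lemma FDD.P_P (F : FDD Z) (i j : ℕ) (z : Z) :
    F.P j (F.P i z) = if j = i then F.P i z else 0 :=
  F.P_of_mem (F.mem_E i z) j

lemma FDD.P_proj (F : FDD Z) (s : Finset ℕ) (j : ℕ) (z : Z) :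
    F.P j (F.proj s z) = if j ∈ s then F.P j z else 0 := by
  rw [F.proj_apply, map_sum]
  rw [show (fun i => F.P j (F.P i z)) = fun i => if j = i then F.P i z else 0 from
    funext fun i => F.P_P i j z]
  simp

lemma FDD.bimonotone_range {F : FDD Z} (hbm : F.Bimonotone) (n : ℕ) (z : Z) :
    ‖F.proj (Finset.range n) z‖ ≤ ‖z‖ := by
  cases n with
  | zero => simp [F.proj_apply]
  | succ k =>
    have : Finset.range (k+1) = Finset.Icc 0 k := by
      ext i; simp [Nat.lt_succ_iff]
    rw [this]
    exact hbm 0 k z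

lemma FDD.P_norm_le {F : FDD Z} (hbm : F.Bimonotone) (i : ℕ) (z : Z) :
    ‖F.P i z‖ ≤ ‖z‖ := by
  have h := hbm i i z
  rwa [Finset.Icc_self, F.proj_apply, Finset.sum_singleton] at h

lemma FDD.tendsto_proj_range (F : FDD Z) (z : Z) :
    Tendsto (fun n => F.proj (Finset.range n) z) atTop (𝓝 z) := by
  have := F.sum_eq z
  simpa [F.proj_apply] using this

end FDDTools

section NodeLemma

variable {Z : Type*} [NormedAddCommGroup Z] [NormedSpace ℝ Z] [CompleteSpace Z]
variable {X : Type*} [NormedAddCommGroup X] [NormedSpace ℝ X] [CompleteSpace X]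

set_option maxHeartbeats 1000000 in
lemma node_lemma (F : FDD Z) (hbm : F.Bimonotone) (hFsh : F.Shrinking)
    (Q : Z →L[ℝ] X) (K : ℝ) (hK : 0 < K)
    (hKlift : ∀ y : X, ∃ z, Q z = y ∧ ‖z‖ ≤ K * ‖y‖)
    (u : ℕ → X) (hwn : ∀ φ : X →L[ℝ] ℝ, Tendsto (fun k => φ (u k)) atTop (𝓝 0))
    (k₁ : ℕ) (hu1 : ∀ k, k₁ ≤ k → ‖u k‖ = 1)
    (m : ℕ) (hEm : F.E m ≠ ⊥) (k₀ : ℕ) (ε : ℝ) (hε : 0 < ε) :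
    ∃ (k : ℕ) (b : Z) (M : ℕ), k₀ < k ∧ m < M ∧
      F.supp b ⊆ Set.Ico m M ∧ F.minSupp b = m ∧ b ≠ 0 ∧ ‖b‖ ≤ 4 * K ∧
      ‖u k - Q b‖ ≤ ε := by
  classical
  set δ : ℝ := min (K/(2*K+3)) (ε/((‖Q‖+1)*(K+3))) with hδdef
  have hQ1 : (0:ℝ) < ‖Q‖ + 1 := by positivity
  have hK3 : (0:ℝ) < K + 3 := by linarith
  have hδpos : 0 < δ := by
    apply lt_min
    · positivity
    · positivity
  have hδ1 : δ ≤ K/(2*K+3) := min_le_left _ _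
  have hδ2 : δ ≤ ε/((‖Q‖+1)*(K+3)) := min_le_right _ _
  -- Step 1 : lifts
  choose z hzQ hzn using hKlift
  set z' : ℕ → Z := fun j => z (u (j + k₁)) with hz'def
  have hz'Q : ∀ j, Q (z' j) = u (j + k₁) := fun j => hzQ _
  have hz'K : ∀ j, ‖z' j‖ ≤ K := by
    intro j
    have h := hzn (u (j + k₁))
    rwa [hu1 _ (Nat.le_add_left _ _), mul_one] at h
  -- Step 2 : compactness in the product of the finite-dimensional pieces
  haveI : ∀ i, FiniteDimensional ℝ (F.E i) := F.finDim
  set seq : ℕ → (∀ i, F.E i) := fun j i => ⟨F.P i (z' j), F.mem_E i _⟩ with hseqdef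
  have hseqmem : ∀ j, seq j ∈ Set.univ.pi (fun i => Metric.closedBall (0 : F.E i) K) := by
    intro j
    rw [Set.mem_univ_pi]
    intro i
    rw [Metric.mem_closedBall, dist_zero_right]
    show ‖F.P i (z' j)‖ ≤ K
    exact (FDD.P_norm_le hbm i _).trans (hz'K j)
  have hcomp : IsCompact (Set.univ.pi (fun i => Metric.closedBall (0 : F.E i) K)) :=
    isCompact_univ_pi (fun i => isCompact_closedBall _ _)
  obtain ⟨wfun, hwmem, φs, hφs, hconv⟩ := hcomp.tendsto_subseq hseqmem
  set w : ℕ → Z := fun i => (wfun i : Z) with hwdef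
  have hwE : ∀ i, w i ∈ F.E i := fun i => (wfun i).2
  have hwK : ∀ i, ‖w i‖ ≤ K := by
    intro i
    have := hwmem i (Set.mem_univ i)
    rw [Metric.mem_closedBall, dist_zero_right] at this
    exact this
  have hcoord : ∀ i, Tendsto (fun j => F.P i (z' (φs j))) atTop (𝓝 (w i)) := by
    intro i
    have h1 := (tendsto_pi_nhds.1 hconv) i
    exact (continuous_subtype_val.tendsto (wfun i)).comp h1
  -- Step 3 : limit partial sums
  set S : ℕ → Z := fun m' => ∑ i ∈ Finset.range m', w i with hSdef
  have hSconv : ∀ m', Tendsto (fun j => F.proj (Finset.range m') (z' (φs j)))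
      atTop (𝓝 (S m')) := by
    intro m'
    have h1 : ∀ j, F.proj (Finset.range m') (z' (φs j))
        = ∑ i ∈ Finset.range m', F.P i (z' (φs j)) := fun j => F.proj_apply _ _
    rw [funext h1]
    exact tendsto_finset_sum _ (fun i _ => hcoord i)
  have hSK : ∀ m', ‖S m'‖ ≤ K := by
    intro m'
    refine le_of_tendsto (hSconv m').norm (Eventually.of_forall fun j => ?_)
    exact (FDD.bimonotone_range hbm m' _).trans (hz'K _)
  have hPS : ∀ i m', i < m' → F.P i (S m') = w i := by
    intro i m' h
    rw [hSdef, map_sum]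
    rw [show (fun x => F.P i (w x)) = fun x => if i = x then w x else 0 from
      funext fun x => F.P_of_mem (hwE x) i]
    simp [Finset.sum_ite_eq, Finset.mem_range, h]
  have hprojS : ∀ m', m ≤ m' → F.proj (Finset.range m) (S m') = S m := by
    intro m' h
    rw [F.proj_apply]
    refine Finset.sum_congr rfl fun i hi => ?_
    exact hPS i m' (lt_of_lt_of_le (Finset.mem_range.1 hi) h)
  -- Step 4 : Q (S m') is weakly null in m'
  have hQS : ∀ φ : X →L[ℝ] ℝ, Tendsto (fun m' => φ (Q (S m'))) atTop (𝓝 0) := by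
    intro φ
    rw [NormedAddCommGroup.tendsto_nhds_zero]
    intro η hη
    set ψ := φ.comp Q with hψdef
    have hη' : 0 < η/(2*(K+1)) := by positivity
    have hev : ∀ᶠ n in atTop, ‖ψ - ψ.comp (F.proj (Finset.range n))‖ < η/(2*(K+1)) :=
      (hFsh ψ).eventually_lt_const hη'
    filter_upwards [hev] with m' hm'
    have hψS : Tendsto (fun j => ψ (F.proj (Finset.range m') (z' (φs j)))) atTop
        (𝓝 (ψ (S m'))) := (ψ.continuous.tendsto (S m')).comp (hSconv m')
    have htail : Tendsto (fun j => φs j + k₁) atTop atTop :=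
      tendsto_atTop_mono (fun j => le_trans hφs.le_apply (Nat.le_add_right _ _)) tendsto_id
    have hb : ∀ j, ‖ψ (F.proj (Finset.range m') (z' (φs j)))‖
        ≤ ‖φ (u (φs j + k₁))‖ + (η/(2*(K+1))) * K := by
      intro j
      have h1 : ψ (F.proj (Finset.range m') (z' (φs j)))
          = ψ (z' (φs j)) - (ψ - ψ.comp (F.proj (Finset.range m'))) (z' (φs j)) := by
        simp [ContinuousLinearMap.sub_apply, ContinuousLinearMap.comp_apply]
      rw [h1]
      refine (norm_sub_le _ _).trans ?_
      have h2 : ‖ψ (z' (φs j))‖ = ‖φ (u (φs j + k₁))‖ := by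
        rw [hψdef]; rw [ContinuousLinearMap.comp_apply, hz'Q]
      rw [h2]
      gcongr
      refine ((ψ - ψ.comp (F.proj (Finset.range m'))).le_opNorm _).trans ?_
      exact mul_le_mul hm'.le (hz'K _) (norm_nonneg _) (by positivity)
    have hlim2 : Tendsto (fun j => ‖φ (u (φs j + k₁))‖ + (η/(2*(K+1))) * K) atTop
        (𝓝 ((η/(2*(K+1))) * K)) := by
      have h := (((hwn φ).comp htail).norm.add_const ((η/(2*(K+1))) * K))
      simpa [Function.comp] using h
    have hle := le_of_tendsto_of_tendsto' hψS.norm hlim2 hb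
    have : (η/(2*(K+1))) * K < η := by
      rw [div_mul_eq_mul_div, div_lt_iff₀ (by positivity)]
      nlinarith
    calc ‖φ (Q (S m'))‖ = ‖ψ (S m')‖ := rfl
      _ ≤ (η/(2*(K+1))) * K := hle
      _ < η := this
  -- Step 5 : Mazur
  set TS : Set X := (fun m' => Q (S m')) '' Set.Ici m with hTSdef
  have h0 : (0:X) ∈ closure (convexHull ℝ TS) := by
    by_contra h0
    obtain ⟨f, c, hfc, hc⟩ := geometric_hahn_banach_closed_point
      ((convex_convexHull ℝ TS).closure) isClosed_closure h0
    rw [map_zero] at hc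
    have hev : ∀ᶠ m' in atTop, c < f (Q (S m')) :=
      (hQS f).eventually (eventually_gt_nhds hc)
    obtain ⟨m', hm1, hm2⟩ := (hev.and (eventually_ge_atTop m)).exists
    have hmemTS : Q (S m') ∈ TS := ⟨m', Set.mem_Ici.2 hm2, rfl⟩
    have := hfc _ (subset_closure (subset_convexHull ℝ TS hmemTS))
    exact absurd this (not_lt.2 hm1.le)
  obtain ⟨p, hpmem, hpδ⟩ := Metric.mem_closure_iff.1 h0 δ hδpos
  rw [dist_comm, dist_zero_right] at hpδ
  rw [convexHull_eq] at hpmem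
  obtain ⟨ι, t, wts, zs, hw0, hw1, hzs, hcm⟩ := hpmem
  choose mi hmi1 hmi2 using hzs
  set T : Z := ∑ i ∈ t.attach, wts i.1 • S (mi i.1 i.2) with hTdef
  have hQT : Q T = p := by
    rw [hTdef, map_sum]
    simp only [map_smul, hmi2]
    rw [Finset.sum_attach t (fun x => wts x • zs x)]
    rw [← hcm, Finset.centerMass, hw1, inv_one, one_smul]
  have hTK : ‖T‖ ≤ K := by
    calc ‖T‖ ≤ ∑ i ∈ t.attach, ‖wts i.1 • S (mi i.1 i.2)‖ := norm_sum_le _ _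
      _ ≤ ∑ i ∈ t.attach, wts i.1 * K := by
          refine Finset.sum_le_sum fun i _ => ?_
          rw [norm_smul, Real.norm_eq_abs, abs_of_nonneg (hw0 i.1 i.2)]
          exact mul_le_mul_of_nonneg_left (hSK _) (hw0 i.1 i.2)
      _ = (∑ i ∈ t, wts i) * K := by rw [← Finset.sum_mul, Finset.sum_attach t wts]
      _ = K := by rw [hw1, one_mul]
  have hprojT : F.proj (Finset.range m) T = S m := by
    rw [hTdef, map_sum]
    have h1 : ∀ i ∈ t.attach, F.proj (Finset.range m) (wts i.1 • S (mi i.1 i.2))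
        = wts i.1 • S m := by
      intro i _
      rw [map_smul, hprojS _ (Set.mem_Ici.1 (hmi1 i.1 i.2))]
    rw [Finset.sum_congr rfl h1, ← Finset.sum_smul, Finset.sum_attach t wts, hw1, one_smul]
  -- Step 6 : subtract an almost-representing kernel element
  set dz : Z := z p with hdzdef
  have hdzQ : Q dz = p := hzQ p
  have hdzn : ‖dz‖ ≤ K * ‖p‖ := hzn p
  have hdzK : ‖dz‖ ≤ K * δ := le_trans hdzn (mul_le_mul_of_nonneg_left hpδ.le hK.le)
  set y : Z := T - dz with hydef
  have hQy : Q y = 0 := by rw [hydef, map_sub, hQT, hdzQ, sub_self]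
  have hprojy : ‖F.proj (Finset.range m) y - S m‖ ≤ K * δ := by
    rw [hydef, map_sub, hprojT]
    have : S m - F.proj (Finset.range m) dz - S m = -(F.proj (Finset.range m) dz) := by abel
    rw [this, norm_neg]
    exact (FDD.bimonotone_range hbm m dz).trans hdzK
  -- Step 7 : choose the index
  obtain ⟨j₀, hj₀⟩ := (Metric.tendsto_atTop.1 (hSconv m)) δ hδpos
  set j : ℕ := max j₀ (k₀ + 1) with hjdef
  have hjd : ‖F.proj (Finset.range m) (z' (φs j)) - S m‖ < δ := by
    have := hj₀ j (le_max_left _ _)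
    rwa [dist_eq_norm] at this
  set k : ℕ := φs j + k₁ with hkdef
  have hkk₀ : k₀ < k := by
    have h1 : j ≤ φs j := hφs.le_apply
    have h2 : k₀ + 1 ≤ j := le_max_right _ _
    omega
  set zf : Z := z' (φs j) - y with hzfdef
  have hQzf : Q zf = u k := by rw [hzfdef, map_sub, hz'Q, hQy, sub_zero]
  have hzfK : ‖zf‖ ≤ 2*K + K*δ := by
    refine (norm_sub_le _ _).trans ?_
    have hy : ‖y‖ ≤ K + K*δ := (norm_sub_le _ _).trans (add_le_add hTK hdzK)
    have := hz'K (φs j)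
    linarith
  have hhead : ‖F.proj (Finset.range m) zf‖ ≤ δ + K*δ := by
    have h1 : F.proj (Finset.range m) zf
        = (F.proj (Finset.range m) (z' (φs j)) - S m)
          - (F.proj (Finset.range m) y - S m) := by
      rw [hzfdef, map_sub]; abel
    rw [h1]
    exact (norm_sub_le _ _).trans (by linarith [hjd.le, hprojy])
  -- Step 8 : truncate on the right
  obtain ⟨M₀, hM₀⟩ := (Metric.tendsto_atTop.1 (F.tendsto_proj_range zf)) δ hδpos
  set M : ℕ := max M₀ (m + 1) with hMdef
  have hmM : m < M := lt_of_lt_of_le (Nat.lt_succ_self m) (le_max_right _ _)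
  have hMd : ‖F.proj (Finset.range M) zf - zf‖ < δ := by
    have := hM₀ M (le_max_left _ _)
    rwa [dist_eq_norm] at this
  set b₀ : Z := F.proj (Finset.range M) zf - F.proj (Finset.range m) zf with hb₀def
  have hb₀zf : ‖b₀ - zf‖ ≤ 2*δ + K*δ := by
    have h1 : b₀ - zf = (F.proj (Finset.range M) zf - zf) - F.proj (Finset.range m) zf := by
      rw [hb₀def]; abel
    rw [h1]
    exact (norm_sub_le _ _).trans (by linarith [hMd.le, hhead])
  have hPb₀ : ∀ i, F.P i b₀ = if m ≤ i ∧ i < M then F.P i zf else 0 := by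
    intro i
    rw [hb₀def, map_sub, F.P_proj, F.P_proj]
    by_cases h1 : i < m
    · rw [if_pos (Finset.mem_range.2 h1), if_pos (Finset.mem_range.2 (by omega)),
        if_neg (by omega), sub_self]
    · by_cases h2 : i < M
      · rw [if_pos (Finset.mem_range.2 h2), if_neg (by simpa using h1),
          if_pos (by omega), sub_zero]
      · rw [if_neg (by simpa using h2), if_neg (by simpa using h1),
          if_neg (by omega), sub_self]
  -- Step 9 : add a spike at coordinate m
  obtain ⟨e₀, he₀E, he₀⟩ := (Submodule.ne_bot_iff _).1 hEm
  set g : Z := F.P m b₀ with hgdef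
  have hgE : g ∈ F.E m := F.mem_E m b₀
  set sp : Z := if g = 0 then (δ/‖e₀‖) • e₀ else (δ/‖g‖) • g with hspdef
  have hspE : sp ∈ F.E m := by
    rw [hspdef]
    split
    · exact Submodule.smul_mem _ _ he₀E
    · exact Submodule.smul_mem _ _ hgE
  have hspn : ‖sp‖ ≤ δ := by
    rw [hspdef]
    split
    · rw [norm_smul, Real.norm_eq_abs,
        abs_of_nonneg (div_nonneg hδpos.le (norm_nonneg _)),
        div_mul_cancel₀ _ (norm_ne_zero_iff.2 he₀)]
    · next h =>
      rw [norm_smul, Real.norm_eq_abs,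
        abs_of_nonneg (div_nonneg hδpos.le (norm_nonneg _)),
        div_mul_cancel₀ _ (norm_ne_zero_iff.2 h)]
  have hPmsp : F.P m sp = sp := by
    have := F.P_of_mem hspE m
    rwa [if_pos rfl] at this
  set b : Z := b₀ + sp with hbdef
  have hPmb : F.P m b ≠ 0 := by
    rw [hbdef, map_add, hPmsp, ← hgdef]
    rw [hspdef]
    split
    · next h => 
      rw [h, zero_add]
      exact smul_ne_zero (div_pos hδpos (norm_pos_iff.2 he₀)).ne' he₀
    · next h =>
      have h1 : g + (δ/‖g‖) • g = (1 + δ/‖g‖) • g := by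
        rw [add_smul, one_smul]
      rw [h1]
      have hgpos : 0 < δ/‖g‖ := div_pos hδpos (norm_pos_iff.2 h)
      exact smul_ne_zero (by linarith) h
  have hPb : ∀ i, i ≠ m → F.P i b = F.P i b₀ := by
    intro i hi
    rw [hbdef, map_add, F.P_of_mem hspE i, if_neg hi, add_zero]
  have hsupp : F.supp b ⊆ Set.Ico m M := by
    intro i hi
    by_contra hni
    rw [Set.mem_Ico] at hni
    have him : i ≠ m := by
      intro h; subst h; exact hni ⟨le_refl _, hmM⟩
    have : F.P i b = 0 := by
      rw [hPb i him, hPb₀ i, if_neg (by omega)]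
    exact hi this
  have hmmem : m ∈ F.supp b := hPmb
  have hminsupp : F.minSupp b = m := by
    refine le_antisymm (Nat.sInf_le hmmem) ?_
    exact le_csInf ⟨m, hmmem⟩ (fun x hx => (hsupp hx).1)
  have hbne : b ≠ 0 := by
    intro h
    rw [h, map_zero] at hPmb
    exact hPmb rfl
  have hδK : (2*K+3) * δ ≤ K := by
    have h1 : (0:ℝ) < 2*K+3 := by linarith
    calc (2*K+3) * δ ≤ (2*K+3) * (K/(2*K+3)) := by gcongr
      _ = K := by field_simp
  have hbK : ‖b‖ ≤ 4 * K := by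
    have h1 : ‖b‖ ≤ ‖zf‖ + ‖b₀ - zf‖ + ‖sp‖ := by
      have : b = zf + (b₀ - zf) + sp := by rw [hbdef]; abel
      rw [this]
      exact (norm_add_le _ _).trans (by gcongr; exact norm_add_le _ _)
    have hδ0 := hδpos.le
    nlinarith [hzfK, hb₀zf, hspn]
  have herr : ‖u k - Q b‖ ≤ ε := by
    have h1 : u k - Q b = Q (zf - b) := by rw [map_sub, hQzf]
    have h2 : ‖zf - b‖ ≤ (3+K)*δ := by
      have : zf - b = -(b₀ - zf) - sp := by rw [hbdef]; abel
      rw [this]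
      refine (norm_sub_le _ _).trans ?_
      rw [norm_neg]
      nlinarith [hb₀zf, hspn]
    rw [h1]
    refine (Q.le_opNorm _).trans ?_
    have h3 : ‖Q‖ * ‖zf - b‖ ≤ (‖Q‖+1) * ((K+3)*δ) := by
      have := norm_nonneg (zf - b)
      nlinarith [norm_nonneg Q, hδpos.le, h2]
    refine h3.trans ?_
    have h4 : (‖Q‖+1) * ((K+3)*δ) ≤ (‖Q‖+1) * ((K+3) * (ε/((‖Q‖+1)*(K+3)))) := by gcongr
    refine h4.trans ?_
    rw [div_eq_mul_inv]
    have h5 : (‖Q‖+1) * ((K+3) * (ε * ((‖Q‖+1)*(K+3))⁻¹)) = ε := by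
      field_simp
    rw [h5]
  exact ⟨k, b, M, hkk₀, hmM, hsupp, hminsupp, hbne, hbK, herr⟩

end NodeLemma

section FinDimCase

variable {Z : Type*} [NormedAddCommGroup Z] [NormedSpace ℝ Z]
variable {X : Type*} [NormedAddCommGroup X] [NormedSpace ℝ X]

lemma fdd_findim (F : FDD Z) (N : ℕ) (h : ∀ i, N < i → F.E i = ⊥) :
    FiniteDimensional ℝ Z := by
  haveI := F.finDim
  set S : Submodule ℝ Z := (Finset.range (N+1)).sup F.E with hSdef
  haveI : FiniteDimensional ℝ S := Submodule.finiteDimensional_finset_sup _ _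
  have htop : ∀ z : Z, z ∈ S := by
    intro z
    have hzero : ∀ i, N < i → F.P i z = 0 := by
      intro i hi
      have hm := F.mem_E i z
      rwa [h i hi, Submodule.mem_bot] at hm
    have hconst : ∀ n, N + 1 ≤ n →
        (∑ i ∈ Finset.range n, F.P i z) = ∑ i ∈ Finset.range (N+1), F.P i z := by
      intro n hn
      rw [← Finset.sum_subset (Finset.range_subset_range.2 hn)]
      intro i hi hni
      rw [Finset.mem_range] at hi hni
      exact hzero i (by omega)
    have h1 : Tendsto (fun n => ∑ i ∈ Finset.range n, F.P i z) atTop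
        (𝓝 (∑ i ∈ Finset.range (N+1), F.P i z)) :=
      tendsto_atTop_of_eventually_const (i₀ := N+1) hconst
    have hz : z = ∑ i ∈ Finset.range (N+1), F.P i z := tendsto_nhds_unique (F.sum_eq z) h1
    rw [hz]
    exact Submodule.sum_mem _ (fun i hi => (Finset.le_sup hi : F.E i ≤ S) (F.mem_E i z))
  have hS : S = ⊤ := Submodule.eq_top_iff'.2 htop
  have hfin : FiniteDimensional ℝ (⊤ : Submodule ℝ Z) := hS ▸ inferInstance
  exact Submodule.topEquiv.finiteDimensional

lemma findim_no_tree [FiniteDimensional ℝ X]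
    (x : Finset ℕ → X) (hx : WNEvenTree x) : False := by
  classical
  have hodd : Odd (({0} : Finset ℕ).card) := by simp
  set u : ℕ → X := fun k => x (insert k {0}) with hudef
  have hnull : Tendsto u atTop (𝓝 0) := by
    set B := Module.finBasis ℝ X with hBdef
    have hrepr : ∀ k, u k = ∑ i, (B.repr (u k)) i • B i := fun k => (B.sum_repr (u k)).symm
    have hlim : Tendsto (fun k => ∑ i, (B.repr (u k)) i • B i) atTop
        (𝓝 (∑ i, (0:ℝ) • B i)) := by
      apply tendsto_finset_sum
      intro i _
      have hcoord := hx.2 {0} hodd (LinearMap.toContinuousLinearMap (B.coord i))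
      have heq : ∀ k, (LinearMap.toContinuousLinearMap (B.coord i)) (x (insert k {0}))
          = (B.repr (u k)) i := by
        intro k
        rw [hudef]
        simp [LinearMap.toContinuousLinearMap, Module.Basis.coord_apply]
      rw [funext heq] at hcoord
      exact hcoord.smul_const (B i)
    have hz : (∑ i, (0:ℝ) • B i) = 0 := by simp
    rw [hz] at hlim
    exact Tendsto.congr (fun k => (hrepr k).symm) hlim
  have h1 : Tendsto (fun k => ‖u k‖) atTop (𝓝 0) := by
    simpa using hnull.norm
  have h2 : ∀ᶠ k in atTop, ‖u k‖ = 1 := by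
    filter_upwards [eventually_gt_atTop 0] with k hk
    apply hx.1
    have hcard : (insert k ({0} : Finset ℕ)).card = 2 := by
      rw [Finset.card_insert_of_notMem (by simp [hk.ne'])]
      simp
    rw [hcard]
    exact ⟨1, rfl⟩
  have h3 : Tendsto (fun k => ‖u k‖) atTop (𝓝 1) := by
    refine Tendsto.congr' ?_ tendsto_const_nhds
    filter_upwards [h2] with k hk
    exact hk.symm
  exact absurd (tendsto_nhds_unique h1 h3) (by norm_num)

end FinDimCase

section MainAssembly

variable {Z : Type*} [NormedAddCommGroup Z] [NormedSpace ℝ Z] [CompleteSpace Z]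
variable {X : Type*} [NormedAddCommGroup X] [NormedSpace ℝ X] [CompleteSpace X]

/-- State of the inductive branch construction. -/
structure BrSt (Z : Type*) where
  m : ℕ
  p : ℕ
  Mf : ℕ
  s : Finset ℕ
  b : Z

def BrPre (l : ℕ) (d : BrSt Z) : Prop :=
  d.s.card = 2*l ∧ (∀ i ∈ d.s, i ≤ d.p)

def BrStep (F : FDD Z) (Q : Z →L[ℝ] X) (K : ℝ) (x : Finset ℕ → X)
    (l : ℕ) (d d' : BrSt Z) : Prop :=
  max d.p d.Mf < d'.m ∧ d'.m < d'.p ∧ d'.m < d'.Mf ∧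
  d'.s = insert d'.p (insert d'.m d.s) ∧
  F.supp d'.b ⊆ Set.Ico d'.m d'.Mf ∧ F.minSupp d'.b = d'.m ∧
  d'.b ≠ 0 ∧ ‖d'.b‖ ≤ 4*K ∧ ‖x d'.s - Q d'.b‖ ≤ (1/2)^l

lemma br_step_exists (F : FDD Z) (hbm : F.Bimonotone) (hFsh : F.Shrinking)
    (Q : Z →L[ℝ] X) (K : ℝ) (hK : 0 < K)
    (hKlift : ∀ y : X, ∃ z, Q z = y ∧ ‖z‖ ≤ K * ‖y‖)
    (Hinf : ∀ N, ∃ i, N < i ∧ F.E i ≠ ⊥)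
    (x : Finset ℕ → X) (hx : WNEvenTree x)
    (l : ℕ) (d : BrSt Z) (hd : BrPre l d) :
    ∃ d', BrStep F Q K x l d d' ∧ BrPre (l+1) d' := by
  classical
  obtain ⟨m', hm'1, hm'2⟩ := Hinf (max d.p d.Mf)
  have hm'p : d.p < m' := lt_of_le_of_lt (le_max_left _ _) hm'1
  have hm'ns : m' ∉ d.s := fun h => absurd (hd.2 m' h) (by omega)
  set s₁ : Finset ℕ := insert m' d.s with hs₁def
  have hcard1 : s₁.card = 2*l+1 := by
    rw [hs₁def, Finset.card_insert_of_notMem hm'ns, hd.1]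
  have hodd : Odd s₁.card := by rw [hcard1]; exact ⟨l, rfl⟩
  set u : ℕ → X := fun k => x (insert k s₁) with hudef
  have hwnseq : ∀ φ : X →L[ℝ] ℝ, Tendsto (fun k => φ (u k)) atTop (𝓝 0) :=
    fun φ => hx.2 s₁ hodd φ
  have hu1 : ∀ k, m'+1 ≤ k → ‖u k‖ = 1 := by
    intro k hk
    have hkns : k ∉ s₁ := by
      rw [hs₁def, Finset.mem_insert]
      rintro (h | h)
      · omega
      · have := hd.2 k h; omega
    apply hx.1
    rw [Finset.card_insert_of_notMem hkns, hcard1]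
    exact ⟨l+1, by ring⟩
  obtain ⟨k, b, M, hkm', hm'M, hsupp, hmin, hne, hbK, herr⟩ :=
    node_lemma F hbm hFsh Q K hK hKlift u hwnseq (m'+1) hu1 m' hm'2 m'
      ((1/2)^l) (by positivity)
  refine ⟨⟨m', k, M, insert k s₁, b⟩, ⟨hm'1, hkm', hm'M, rfl, hsupp, hmin, hne, hbK, herr⟩, ?_, ?_⟩
  · have hkns : k ∉ s₁ := by
      rw [hs₁def, Finset.mem_insert]
      rintro (h | h)
      · omega
      · have := hd.2 k h; omega
    show (insert k s₁).card = 2*(l+1)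
    rw [Finset.card_insert_of_notMem hkns, hcard1]
    ring
  · intro i hi
    show i ≤ k
    rw [Finset.mem_insert, hs₁def, Finset.mem_insert] at hi
    rcases hi with h | h | h
    · omega
    · omega
    · have := hd.2 i h; omega

end MainAssembly

lemma half_geom_sum_eq (N : ℕ) :
    ∑ l ∈ Finset.range N, ((1:ℝ)/2)^l = 2 - 2*((1:ℝ)/2)^N := by
  induction N with
  | zero => simp
  | succ n ih => rw [Finset.sum_range_succ, ih, pow_succ]; ring

lemma half_geom_sum_le (N : ℕ) : ∑ l ∈ Finset.range N, ((1:ℝ)/2)^l ≤ 2 := by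
  rw [half_geom_sum_eq]
  have h1 : (0:ℝ) ≤ (1/2)^N := by positivity
  linarith

set_option maxHeartbeats 1000000 in
/-- Quotients of spaces with a shrinking bimonotone FDD satisfying subsequential `V`
upper block estimates satisfy subsequential `V` upper tree estimates (the implication
(3) ⇒ (1) of Theorem 1.1). -/
theorem upper_tree_of_quotient_upper_block
    {X : Type*} [NormedAddCommGroup X] [NormedSpace ℝ X] [CompleteSpace X]
    {Z : Type*} [NormedAddCommGroup Z] [NormedSpace ℝ Z] [CompleteSpace Z]
    {V : Type*} [NormedAddCommGroup V] [NormedSpace ℝ V] [CompleteSpace V]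
    (v : ℕ → V)
    (hvnorm : IsNormalized v) (hvuncond : IsOneUnconditional v)
    (hvbasic : IsBasicSeq v) (hvright : RightDominant v)
    (F : FDD Z) (hFsh : F.Shrinking) (hbm : F.Bimonotone) (hub : F.UpperBlock v)
    (Q : Z →L[ℝ] X) (hQ : Function.Surjective Q) :
    UpperTree v X := by
  classical
  obtain ⟨Cb, hCb1, hCb⟩ := hub
  obtain ⟨K, hK, hKlift⟩ := Q.exists_preimage_norm_le hQ
  set C : ℝ := max 1 (‖Q‖ * (Cb * (4*K)) + 2) with hCdef
  refine ⟨C, le_max_left _ _, ?_⟩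
  intro x hx
  by_cases Hinf : ∀ N, ∃ i, N < i ∧ F.E i ≠ ⊥
  case neg =>
    push_neg at Hinf
    obtain ⟨N, hN⟩ := Hinf
    haveI : FiniteDimensional ℝ Z := fdd_findim F N (fun i hi => hN i hi)
    haveI : FiniteDimensional ℝ X :=
      Module.Finite.of_surjective (Q : Z →ₗ[ℝ] X) hQ
    exact absurd hx (fun h => findim_no_tree x h)
  case pos =>
    -- build the branch recursively
    have hstep := br_step_exists F hbm hFsh Q K hK hKlift Hinf x hx
    choose f hf1 hf2 using hstep
    let D : ∀ _ : ℕ, {d : BrSt Z // BrPre _ d} := fun l =>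
      Nat.rec (motive := fun l => {d : BrSt Z // BrPre l d})
        ⟨⟨0, 0, 0, ∅, 0⟩, by constructor <;> simp⟩
        (fun l ih => ⟨f l ih.1 ih.2, hf2 l ih.1 ih.2⟩) l
    have hD : ∀ l, BrStep F Q K x l (D l).1 (D (l+1)).1 :=
      fun l => hf1 l (D l).1 (D l).2
    set mm : ℕ → ℕ := fun l => (D (l+1)).1.m with hmmdef
    set pp : ℕ → ℕ := fun l => (D (l+1)).1.p with hppdef
    set MM : ℕ → ℕ := fun l => (D (l+1)).1.Mf with hMMdef
    set ss : ℕ → Finset ℕ := fun l => (D (l+1)).1.s with hssdef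
    set bb : ℕ → Z := fun l => (D (l+1)).1.b with hbbdef
    have hmp : ∀ l, mm l < pp l := fun l => (hD l).2.1
    have hmM : ∀ l, mm l < MM l := fun l => (hD l).2.2.1
    have hnext : ∀ l, max (pp l) (MM l) < mm (l+1) := fun l => (hD (l+1)).1
    have hsins : ∀ l, ss l = insert (pp l) (insert (mm l) ((D l).1.s)) :=
      fun l => (hD l).2.2.2.1
    have hsupp : ∀ l, F.supp (bb l) ⊆ Set.Ico (mm l) (MM l) :=
      fun l => (hD l).2.2.2.2.1
    have hmin : ∀ l, F.minSupp (bb l) = mm l := fun l => (hD l).2.2.2.2.2.1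
    have hbne : ∀ l, bb l ≠ 0 := fun l => (hD l).2.2.2.2.2.2.1
    have hbK : ∀ l, ‖bb l‖ ≤ 4*K := fun l => (hD l).2.2.2.2.2.2.2.1
    have herr : ∀ l, ‖x (ss l) - Q (bb l)‖ ≤ (1/2)^l :=
      fun l => (hD l).2.2.2.2.2.2.2.2
    have hmmono : StrictMono mm := by
      apply strictMono_nat_of_lt_succ
      intro l
      have h1 := hmp l
      have h2 := hnext l
      have h3 : pp l ≤ max (pp l) (MM l) := le_max_left _ _
      omega
    -- the branch
    set n : ℕ → ℕ := fun k => if k % 2 = 0 then mm (k/2) else pp (k/2) with hndef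
    have hn2 : ∀ l, n (2*l) = mm l := by
      intro l
      have h1 : (2*l) % 2 = 0 := by omega
      have h2 : (2*l)/2 = l := by omega
      simp [hndef, h1, h2]
    have hn2' : ∀ l, n (2*l+1) = pp l := by
      intro l
      have h1 : (2*l+1) % 2 = 1 := by omega
      have h2 : (2*l+1)/2 = l := by omega
      simp [hndef, h1, h2]
    have hnmono : StrictMono n := by
      apply strictMono_nat_of_lt_succ
      intro k
      rcases Nat.even_or_odd k with he | ho
      · obtain ⟨t, rfl⟩ := he
        have e1 : t + t = 2*t := by ring
        rw [e1, hn2 t, show 2*t+1 = 2*t+1 from rfl, hn2' t]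
        exact hmp t
      · obtain ⟨t, rfl⟩ := ho
        have e1 : 2*t+1+1 = 2*(t+1) := by ring
        rw [e1, hn2 (t+1), hn2' t]
        have := hnext t
        have h3 : pp t ≤ max (pp t) (MM t) := le_max_left _ _
        omega
    -- identify the branch sets
    have hbr : ∀ l, branchSet n l = ss l := by
      intro l
      induction l with
      | zero =>
        have h0 : branchSet n 0 = insert (n 1) (insert (n 0) ∅) := by
          rw [branchSet, show 2*0+2 = 2 from rfl, Finset.range_add_one, Finset.range_add_one,
            Finset.range_zero, Finset.image_insert, Finset.image_insert, Finset.image_empty]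
        rw [h0, hsins 0]
        have hs0 : (D 0).1.s = ∅ := rfl
        rw [hs0]
        have e0 : n 0 = mm 0 := hn2 0
        have e1 : n 1 = pp 0 := by
          have := hn2' 0
          simpa using this
        rw [e0, e1]
      | succ l ih =>
        have e1 : 2*(l+1)+2 = (2*l+2) + 1 + 1 := by ring
        have h1 : branchSet n (l+1)
            = insert (n (2*l+3)) (insert (n (2*l+2)) (branchSet n l)) := by
          rw [branchSet, branchSet, e1, Finset.range_add_one, Finset.range_add_one,
            Finset.image_insert, Finset.image_insert]
        have e2 : n (2*l+2) = mm (l+1) := by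
          have : 2*l+2 = 2*(l+1) := by ring
          rw [this, hn2]
        have e3 : n (2*l+3) = pp (l+1) := by
          have : 2*l+3 = 2*(l+1)+1 := by ring
          rw [this, hn2']
        rw [h1, ih, e2, e3, hsins (l+1)]
    refine ⟨n, hnmono, ?_⟩
    -- the domination estimate
    intro a N
    have hgoal1 : ∀ l ∈ Finset.range N, a l • x (branchSet n l) = a l • x (ss l) :=
      fun l _ => by rw [hbr l]
    have hgoal2 : ∀ l ∈ Finset.range N, a l • v (n (2*l)) = a l • v (mm l) :=
      fun l _ => by rw [hn2 l]
    rw [Finset.sum_congr rfl hgoal1, Finset.sum_congr rfl hgoal2]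
    -- split into block part and error part
    have hsplit : ∑ l ∈ Finset.range N, a l • x (ss l)
        = Q (∑ l ∈ Finset.range N, a l • bb l)
          + ∑ l ∈ Finset.range N, a l • (x (ss l) - Q (bb l)) := by
      rw [map_sum, ← Finset.sum_add_distrib]
      refine Finset.sum_congr rfl fun l _ => ?_
      rw [map_smul, smul_sub]
      abel
    set R : ℝ := ‖∑ l ∈ Finset.range N, a l • v (mm l)‖ with hRdef
    have hR0 : 0 ≤ R := norm_nonneg _
    -- error estimate
    have herr2 : ‖∑ l ∈ Finset.range N, a l • (x (ss l) - Q (bb l))‖ ≤ 2 * R := by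
      calc ‖∑ l ∈ Finset.range N, a l • (x (ss l) - Q (bb l))‖
          ≤ ∑ l ∈ Finset.range N, ‖a l • (x (ss l) - Q (bb l))‖ := norm_sum_le _ _
        _ ≤ ∑ l ∈ Finset.range N, R * (1/2)^l := by
            refine Finset.sum_le_sum fun l hl => ?_
            rw [norm_smul, Real.norm_eq_abs]
            have h1 : |a l| ≤ R :=
              uncond_coord_sub hvuncond hvnorm hmmono a (Finset.mem_range.1 hl)
            have h2 := herr l
            have h3 : (0:ℝ) ≤ (1/2)^l := by positivity
            nlinarith [abs_nonneg (a l), norm_nonneg (x (ss l) - Q (bb l))]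
        _ = R * ∑ l ∈ Finset.range N, ((1:ℝ)/2)^l := by rw [Finset.mul_sum]
        _ ≤ R * 2 := by
            have := half_geom_sum_le N
            nlinarith
        _ = 2 * R := by ring
    -- block estimate
    set β : ℕ → Z := fun l => ‖bb l‖⁻¹ • bb l with hβdef
    have hnz : ∀ l, ‖bb l‖ ≠ 0 := fun l => norm_ne_zero_iff.2 (hbne l)
    have hsuppβ : ∀ l, F.supp (β l) = F.supp (bb l) := by
      intro l
      ext i
      show F.P i (β l) ≠ 0 ↔ F.P i (bb l) ≠ 0
      rw [hβdef]
      simp only [map_smul, ne_eq, smul_eq_zero, not_or]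
      constructor
      · intro h; exact h.2
      · intro h; exact ⟨inv_ne_zero (hnz l), h⟩
    have hblock : F.IsBlockSeq β := by
      refine ⟨mm, hmmono, fun l => ?_⟩
      rw [hsuppβ l]
      refine (hsupp l).trans ?_
      intro i hi
      rw [Set.mem_Ico] at hi ⊢
      have h1 := hnext l
      have h2 : MM l ≤ max (pp l) (MM l) := le_max_right _ _
      omega
    have hβnorm : ∀ l, ‖β l‖ = 1 := by
      intro l
      rw [hβdef]
      simp only [norm_smul, norm_inv, norm_norm]
      rw [inv_mul_cancel₀ (hnz l)]
    have hminβ : ∀ l, F.minSupp (β l) = mm l := by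
      intro l
      rw [FDD.minSupp, hsuppβ l]
      exact hmin l
    have hdom := hCb β hblock hβnorm (fun l => a l * ‖bb l‖) N
    have hLHS : ∑ l ∈ Finset.range N, (a l * ‖bb l‖) • β l
        = ∑ l ∈ Finset.range N, a l • bb l := by
      refine Finset.sum_congr rfl fun l _ => ?_
      rw [hβdef, smul_smul, mul_assoc, mul_inv_cancel₀ (hnz l), mul_one]
    have hRHS : ∑ l ∈ Finset.range N, (a l * ‖bb l‖) • v (F.minSupp (β l))
        = ∑ l ∈ Finset.range N, (a l * ‖bb l‖) • v (mm l) := by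
      refine Finset.sum_congr rfl fun l _ => ?_
      rw [hminβ l]
    rw [hLHS, hRHS] at hdom
    -- multiplier estimate on the `v` side
    have h4K : (0:ℝ) < 4*K := by linarith
    have hmul : ‖∑ l ∈ Finset.range N, (a l * ‖bb l‖) • v (mm l)‖ ≤ (4*K) * R := by
      have hlam : ∀ l, |‖bb l‖ * (4*K)⁻¹| ≤ 1 := by
        intro l
        rw [abs_of_nonneg (by positivity)]
        calc ‖bb l‖ * (4*K)⁻¹ ≤ (4*K) * (4*K)⁻¹ := by
              gcongr
              exact hbK l
          _ = 1 := mul_inv_cancel₀ h4K.ne'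
      have hre : ∀ l ∈ Finset.range N, (a l * ‖bb l‖) • v (mm l)
          = ((‖bb l‖ * (4*K)⁻¹) * ((4*K) * a l)) • v (mm l) := by
        intro l _
        congr 1
        field_simp
      rw [Finset.sum_congr rfl hre]
      refine (uncond_mul_sub hvuncond hmmono (fun l => (4*K) * a l)
        (fun l => ‖bb l‖ * (4*K)⁻¹) hlam N).trans ?_
      have hout : ∑ l ∈ Finset.range N, ((4*K) * a l) • v (mm l)
          = (4*K) • ∑ l ∈ Finset.range N, a l • v (mm l) := by
        rw [Finset.smul_sum]
        exact Finset.sum_congr rfl fun l _ => by rw [smul_smul]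
      rw [hout, norm_smul, Real.norm_eq_abs, abs_of_pos h4K]
    -- assemble
    calc ‖∑ l ∈ Finset.range N, a l • x (ss l)‖
        ≤ ‖Q (∑ l ∈ Finset.range N, a l • bb l)‖
          + ‖∑ l ∈ Finset.range N, a l • (x (ss l) - Q (bb l))‖ := by
          rw [hsplit]; exact norm_add_le _ _
      _ ≤ ‖Q‖ * ‖∑ l ∈ Finset.range N, a l • bb l‖ + 2 * R :=
          add_le_add (Q.le_opNorm _) herr2
      _ ≤ ‖Q‖ * (Cb * ((4*K) * R)) + 2 * R := by
          have hCb0 : (0:ℝ) ≤ Cb := by linarith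
          have hstep1 : ‖∑ l ∈ Finset.range N, a l • bb l‖ ≤ Cb * ((4*K) * R) :=
            hdom.trans (mul_le_mul_of_nonneg_left hmul hCb0)
          have hQ0 : (0:ℝ) ≤ ‖Q‖ := norm_nonneg _
          nlinarith [hstep1]
      _ = (‖Q‖ * (Cb * (4*K)) + 2) * R := by ring
      _ ≤ C * R := by
          have := le_max_right (1:ℝ) (‖Q‖ * (Cb * (4*K)) + 2)
          nlinarith
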